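/- Let R be a Bezout domain (every finitely generated ideal is principal) which is adequate: for all a, b ∈ R one can write a = a₁a₂ with gcd(a₁, b) = 1 and such that every non-unit divisor a₃ of a₂ satisfies gcd(a₃, b) ≠ 1. Then every matrix M ∈ M_{d×e}(R) admits a Smith normal form: M = P·diag(f₁,…,f_min(d,e))·Q with P ∈ GL_d(R), Q ∈ GL_e(R), and f₁ | f₂ | ⋯. -/

import Mathlib

open Matrix

section Helmer

set_option linter.unusedSectionVars false

variable {R : Type*} [CommRing R] [IsDomain R] [IsBezout R]

/-- Bezout: every finite family has a gcd which is a linear combination. -/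
theorem hz_exists_gcd {ι : Type} [Fintype ι] (s : ι → R) :
    ∃ (g : R) (w t : ι → R), (∑ i, w i * s i) = g ∧ ∀ i, s i = g * t i := by
  classical
  have hfg : (Ideal.span (Set.range s)).FG := Submodule.fg_span (Set.finite_range s)
  have hpr := IsBezout.isPrincipal_of_FG _ hfg
  set g := Submodule.IsPrincipal.generator (Ideal.span (Set.range s)) with hg
  have hspan : Ideal.span {g} = Ideal.span (Set.range s) :=
    Submodule.IsPrincipal.span_singleton_generator _
  have hmem : g ∈ Ideal.span (Set.range s) := by
    rw [← hspan]; exact Ideal.subset_span rfl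
  obtain ⟨c, hc⟩ := (Submodule.mem_span_range_iff_exists_fun R).mp hmem
  have ht : ∀ i, ∃ t, s i = g * t := by
    intro i
    have : s i ∈ Ideal.span {g} := by
      rw [hspan]; exact Ideal.subset_span ⟨i, rfl⟩
    obtain ⟨t, ht⟩ := Ideal.mem_span_singleton'.mp this
    exact ⟨t, by rw [← ht, mul_comm]⟩
  choose t ht using ht
  exact ⟨g, c, t, by simpa [smul_eq_mul] using hc, ht⟩

theorem hz_gcd_pair (a b : R) :
    ∃ (g x y t₀ t₁ : R), x * a + y * b = g ∧ a = g * t₀ ∧ b = g * t₁ := by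
  obtain ⟨g, w, t, hsum, ht⟩ := hz_exists_gcd (R := R) ![a, b]
  refine ⟨g, w 0, w 1, t 0, t 1, ?_, ?_, ?_⟩
  · simpa [Fin.sum_univ_two] using hsum
  · simpa using ht 0
  · simpa using ht 1

theorem hz_isCoprime_of_combo {a b x y g : R} (h : x * a + y * b = g) (hg : IsUnit g) :
    IsCoprime a b := by
  obtain ⟨u, hu⟩ := hg
  refine ⟨(↑u⁻¹ : Rˣ) * x, (↑u⁻¹ : Rˣ) * y, ?_⟩
  have h2 : ((↑u⁻¹ : Rˣ) : R) * (x * a + y * b) = 1 := by rw [h, ← hu, Units.inv_mul]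
  rw [← h2]; ring

variable (hadequate : ∀ a b : R, a ≠ 0 → ∃ a₁ a₂ : R, a = a₁ * a₂ ∧ IsCoprime a₁ b ∧
      ∀ a₃ : R, a₃ ∣ a₂ → ¬IsUnit a₃ → ¬IsCoprime a₃ b)

include hadequate in
/-- The Kaplansky/Helmer condition T. -/
theorem hz_T (a b c : R) (h : ∃ x y z, x * a + y * b + z * c = 1) :
    ∃ p q, IsCoprime (p * a) (p * b + q * c) ∧ (a ≠ 0 → p = 1) := by
  obtain ⟨x₀, y₀, z₀, hcombo⟩ := h
  by_cases ha : a = 0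
  · subst ha
    refine ⟨y₀, z₀, ?_, fun h => absurd rfl h⟩
    have h1 : y₀ * b + z₀ * c = 1 := by rw [← hcombo]; ring
    rw [mul_zero]
    rw [h1]
    exact isCoprime_zero_left.mpr isUnit_one
  · obtain ⟨a₁, a₂, ha12, hco, hmax⟩ := hadequate a b ha
    refine ⟨1, a₁, ?_, fun _ => rfl⟩
    rw [one_mul, one_mul]
    -- goal: IsCoprime a (b + a₁ * c)
    obtain ⟨g, x, y, t₁, t₂, hgcombo, hga, hgb⟩ := hz_gcd_pair a (b + a₁ * c)
    suffices hg : IsUnit g from hz_isCoprime_of_combo hgcombo hg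
    -- step 1 : IsCoprime a₁ g
    have hstep1 : IsCoprime a₁ g := by
      obtain ⟨h', x', y', s₁, s₂, hc2, hh1, hh2⟩ := hz_gcd_pair a₁ g
      have hhb : h' ∣ b := by
        have h1 : h' ∣ b + a₁ * c := (Dvd.intro s₂ hh2.symm).trans (Dvd.intro t₂ hgb.symm)
        have h2 : h' ∣ a₁ * c := (Dvd.intro s₁ hh1.symm).mul_right c
        simpa using h1.sub h2
      have hunit : IsUnit h' := hco.isUnit_of_dvd' (Dvd.intro s₁ hh1.symm) hhb
      exact hz_isCoprime_of_combo hc2 hunit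
    -- step 2 : g ∣ a₂
    have hga2 : g ∣ a₂ := by
      have : g ∣ a₁ * a₂ := by rw [← ha12]; exact Dvd.intro t₁ hga.symm
      exact (hstep1.symm).dvd_of_dvd_mul_left this
    by_contra hgu
    have hnc := hmax g hga2 hgu
    apply hnc
    -- show IsCoprime g b
    obtain ⟨k, xk, yk, k₁, k₂, hkc, hkg, hkb⟩ := hz_gcd_pair g b
    have hkdvdg : k ∣ g := Dvd.intro k₁ hkg.symm
    have hkac : k ∣ a₁ * c := by
      have h1 : k ∣ b + a₁ * c := hkdvdg.trans (Dvd.intro t₂ hgb.symm)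
      have h2 : k ∣ b := Dvd.intro k₂ hkb.symm
      simpa using h1.sub h2
    have hck : IsCoprime a₁ k := by
      obtain ⟨u, v, huv⟩ := hstep1
      exact ⟨u, v * k₁, by rw [← huv, hkg]; ring⟩
    have hkc' : k ∣ c := (hck.symm).dvd_of_dvd_mul_left hkac
    have hka : k ∣ a := hkdvdg.trans (Dvd.intro t₁ hga.symm)
    have hkb' : k ∣ b := Dvd.intro k₂ hkb.symm
    have hk1 : k ∣ 1 := by
      rw [← hcombo]
      exact ((hka.mul_left x₀).add (hkb'.mul_left y₀)).add (hkc'.mul_left z₀)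
    exact hz_isCoprime_of_combo hkc (isUnit_of_dvd_one hk1)

end Helmer

section Helmer2

set_option linter.unusedSectionVars false

variable {R : Type*} [CommRing R] [IsDomain R] [IsBezout R]

variable (hadequate : ∀ a b : R, a ≠ 0 → ∃ a₁ a₂ : R, a = a₁ * a₂ ∧ IsCoprime a₁ b ∧
      ∀ a₃ : R, a₃ ∣ a₂ → ¬IsUnit a₃ → ¬IsCoprime a₃ b)

include hadequate in
/-- Lemma V: a single row can be combined to something coprime to a scalar. -/
theorem hz_V : ∀ (n : ℕ) (a : R) (s : Fin n → R),
    (∃ (x : R) (y : Fin n → R), x * a + ∑ j, y j * s j = 1) →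
    ∃ v : Fin n → R, IsCoprime a (∑ j, v j * s j) := by
  intro n
  induction n with
  | zero =>
    intro a s ⟨x, y, hxy⟩
    refine ⟨0, ?_⟩
    simp only [Finset.univ_eq_empty, Finset.sum_empty] at hxy ⊢
    rw [add_zero] at hxy
    exact isCoprime_zero_right.mpr (IsUnit.of_mul_eq_one (a := a) x (by rw [mul_comm, hxy]))
  | succ n ih =>
    intro a s ⟨x, y, hxy⟩
    rw [Fin.sum_univ_succ] at hxy
    obtain ⟨a', x', y', ta, t₀, hc, hda, hd0⟩ := hz_gcd_pair a (s 0)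
    -- span {a'} ∪ tail = ⊤
    have hIH : ∃ (x₁ : R) (y₁ : Fin n → R), x₁ * a' + ∑ j, y₁ j * s j.succ = 1 := by
      refine ⟨x * ta + y 0 * t₀, fun j => y j.succ, ?_⟩
      linear_combination hxy - x * hda - y 0 * hd0
    obtain ⟨vb, hvb⟩ := ih a' (fun j => s j.succ) hIH
    set m := ∑ j, vb j * s j.succ with hm
    obtain ⟨α, β, hαβ⟩ := hvb
    -- T on (a, m, s 0)
    obtain ⟨p, q, hpq, _⟩ := hz_T hadequate a m (s 0)
      ⟨α * x', β, α * y', by linear_combination hαβ + α * hc⟩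
    set v : Fin (n+1) → R := Fin.cons q (fun j => p * vb j) with hv
    refine ⟨v, ?_⟩
    have hco : IsCoprime a (p * m + q * s 0) := hpq.of_mul_left_right
    have hsum : (∑ j, v j * s j) = p * m + q * s 0 := by
      rw [Fin.sum_univ_succ, hm, Finset.mul_sum]
      simp only [hv, Fin.cons_zero, Fin.cons_succ]
      rw [add_comm]
      congr 1
      exact Finset.sum_congr rfl fun j _ => by ring
    rw [hsum]; exact hco

include hadequate in
/-- The triangular 2×2 core lemma. -/
theorem hz_C22 (a β c₀ s : R)
    (h : ∃ x₁ x₂ x₃ x₄, x₁ * a + x₂ * β + x₃ * c₀ + x₄ * s = 1) :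
    ∃ u₀ u₁ v₀ v₁, IsCoprime a (u₀ * (β * v₀) + u₁ * (c₀ * v₀ + v₁ * s)) := by
  obtain ⟨x₁, x₂, x₃, x₄, hcombo⟩ := h
  obtain ⟨h₀, xa, yb, ta, tb, hc, hda, hdb⟩ := hz_gcd_pair a β
  by_cases hh : h₀ = 0
  · subst hh
    rw [zero_mul] at hda hdb
    refine ⟨0, 1, x₃, x₄, ?_⟩
    have h1 : (0:R) * (β * x₃) + 1 * (c₀ * x₃ + x₄ * s) = 1 := by
      linear_combination hcombo - x₁ * hda - x₂ * hdb
    rw [hda, h1]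
    exact isCoprime_zero_left.mpr isUnit_one
  · -- T on (h₀, c₀, s)
    obtain ⟨p, q, hpq, hp1⟩ := hz_T hadequate h₀ c₀ s
      ⟨x₁ * ta + x₂ * tb, x₃, x₄, by linear_combination hcombo - x₁ * hda - x₂ * hdb⟩
    rw [hp1 hh, one_mul, one_mul] at hpq
    set m := c₀ + q * s with hm
    obtain ⟨α, γ, hαγ⟩ := hpq
    -- T on (a, m, β)
    obtain ⟨p₁, q₁, hpq1, _⟩ := hz_T hadequate a m β
      ⟨α * xa, γ, α * yb, by linear_combination hαγ + α * hc⟩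
    refine ⟨q₁, p₁, 1, q, ?_⟩
    have hco : IsCoprime a (p₁ * m + q₁ * β) := hpq1.of_mul_left_right
    have : q₁ * (β * 1) + p₁ * (c₀ * 1 + q * s) = p₁ * m + q₁ * β := by rw [hm]; ring
    rw [this]; exact hco

end Helmer2

section Mix
variable {R : Type*} [CommRing R]

/-- A matrix acting as a 2×2 block on coordinates `i₀, i₁` and identity elsewhere. -/
def hz_twoMix {ι : Type} [Fintype ι] [DecidableEq ι] (i₀ i₁ : ι) (x z y w : R) :
    Matrix ι ι R := Matrix.of fun i j =>
  if i = i₀ then (if j = i₀ then x else if j = i₁ then z else 0)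
  else if i = i₁ then (if j = i₀ then y else if j = i₁ then w else 0)
  else if i = j then 1 else 0

variable {ι : Type} [Fintype ι] [DecidableEq ι]

theorem hz_twoMix_vecMul (i₀ i₁ : ι) (hne : i₀ ≠ i₁) (x z y w : R) (r : ι → R) (j : ι) :
    (r ᵥ* hz_twoMix i₀ i₁ x z y w) j =
      if j = i₀ then r i₀ * x + r i₁ * y
      else if j = i₁ then r i₀ * z + r i₁ * w else r j := by
  classical
  have h1 : (r ᵥ* hz_twoMix i₀ i₁ x z y w) j
      = ∑ i, r i * hz_twoMix i₀ i₁ x z y w i j := rfl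
  rw [h1, ← Finset.add_sum_erase _ _ (Finset.mem_univ i₀),
    ← Finset.add_sum_erase _ _ (Finset.mem_erase.mpr ⟨hne.symm, Finset.mem_univ i₁⟩)]
  have h2 : ∀ i ∈ (Finset.univ.erase i₀).erase i₁,
      r i * hz_twoMix i₀ i₁ x z y w i j = if i = j then r i else 0 := by
    intro i hi
    have hi1 : i ≠ i₁ := (Finset.mem_erase.mp hi).1
    have hi0 : i ≠ i₀ := (Finset.mem_erase.mp (Finset.mem_erase.mp hi).2).1
    simp [hz_twoMix, hi1, hi0, mul_ite]
  rw [Finset.sum_congr rfl h2, Finset.sum_ite_eq']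
  by_cases hj0 : j = i₀
  · subst hj0
    simp [hz_twoMix, hne, hne.symm]
  · by_cases hj1 : j = i₁
    · subst hj1
      simp [hz_twoMix, hne, hne.symm, hj0]
    · simp [hz_twoMix, hj0, hj1, Ne.symm hj0, Ne.symm hj1]

theorem hz_twoMix_row (i₀ i₁ : ι) (i : ι) (x z y w : R) :
    hz_twoMix i₀ i₁ x z y w i = fun j =>
      if i = i₀ then (if j = i₀ then x else if j = i₁ then z else 0)
      else if i = i₁ then (if j = i₀ then y else if j = i₁ then w else 0)
      else if i = j then 1 else 0 := rfl

theorem hz_twoMix_mul (i₀ i₁ : ι) (hne : i₀ ≠ i₁) (x z y w x' z' y' w' : R) :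
    hz_twoMix i₀ i₁ x z y w * hz_twoMix i₀ i₁ x' z' y' w' =
      hz_twoMix i₀ i₁ (x*x' + z*y') (x*z' + z*w') (y*x' + w*y') (y*z' + w*w') := by
  ext i j
  have hrow : (hz_twoMix i₀ i₁ x z y w * hz_twoMix i₀ i₁ x' z' y' w') i j
      = ((hz_twoMix i₀ i₁ x z y w i) ᵥ* hz_twoMix i₀ i₁ x' z' y' w') j := rfl
  rw [hrow, hz_twoMix_vecMul i₀ i₁ hne]
  clear hrow
  have hne' : i₁ ≠ i₀ := hne.symm
  by_cases hi0 : i = i₀ <;> by_cases hi1 : i = i₁ <;>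
    by_cases hj0 : j = i₀ <;> by_cases hj1 : j = i₁ <;>
    simp_all [hz_twoMix] <;> ring

theorem hz_twoMix_one (i₀ i₁ : ι) (hne : i₀ ≠ i₁) :
    hz_twoMix i₀ i₁ (1:R) 0 0 1 = 1 := by
  have hne' : i₁ ≠ i₀ := hne.symm
  ext i j
  by_cases hi0 : i = i₀ <;> by_cases hi1 : i = i₁ <;>
    by_cases hj0 : j = i₀ <;> by_cases hj1 : j = i₁ <;>
    simp_all [hz_twoMix, Matrix.one_apply, eq_comm]
end Mix

section Reduce
variable {R : Type*} [CommRing R] [IsDomain R] [IsBezout R]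

/-- Bezout column reduction: a row vector can be transformed by an invertible matrix
so that all coordinates except `i₀` vanish. -/
theorem hz_reduce_row {ι : Type} [Fintype ι] [DecidableEq ι] (i₀ : ι) (r : ι → R) :
    ∃ Q Q' : Matrix ι ι R, Q * Q' = 1 ∧ Q' * Q = 1 ∧ ∀ j, j ≠ i₀ → (r ᵥ* Q) j = 0 := by
  classical
  generalize hn : (Finset.univ.filter (fun j => j ≠ i₀ ∧ r j ≠ 0)).card = n
  induction n using Nat.strong_induction_on generalizing r with
  | _ n ih =>
  by_cases hs : ∀ j, j ≠ i₀ → r j = 0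
  · exact ⟨1, 1, by simp, by simp, fun j hj => by rw [Matrix.vecMul_one]; exact hs j hj⟩
  · push_neg at hs
    obtain ⟨j₁, hj₁0, hj₁⟩ := hs
    obtain ⟨g, x, y, t₀, t₁, hcombo, h0, h1⟩ := hz_gcd_pair (r i₀) (r j₁)
    have hg : g ≠ 0 := fun h => hj₁ (by rw [h1, h, zero_mul])
    have hdet : x * t₀ + y * t₁ = 1 := by
      have h2 : g * (x * t₀ + y * t₁) = g * 1 := by
        linear_combination hcombo - x * h0 - y * h1
      exact mul_left_cancel₀ hg h2
    have hne : i₀ ≠ j₁ := Ne.symm hj₁0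
    set S := hz_twoMix i₀ j₁ x (-t₁) y t₀ with hS
    set S' := hz_twoMix i₀ j₁ t₀ t₁ (-y) x with hS'
    have hSS' : S * S' = 1 := by
      rw [hS, hS', hz_twoMix_mul i₀ j₁ hne]
      have e1 : x * t₀ + (-t₁) * (-y) = 1 := by linear_combination hdet
      have e2 : x * t₁ + (-t₁) * x = (0:R) := by ring
      have e3 : y * t₀ + t₀ * (-y) = (0:R) := by ring
      have e4 : y * t₁ + t₀ * x = 1 := by linear_combination hdet
      rw [e1, e2, e3, e4, hz_twoMix_one i₀ j₁ hne]
    have hS'S : S' * S = 1 := by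
      rw [hS, hS', hz_twoMix_mul i₀ j₁ hne]
      have e1 : t₀ * x + t₁ * y = 1 := by linear_combination hdet
      have e2 : t₀ * (-t₁) + t₁ * t₀ = (0:R) := by ring
      have e3 : (-y) * x + x * y = (0:R) := by ring
      have e4 : (-y) * (-t₁) + x * t₀ = 1 := by linear_combination hdet
      rw [e1, e2, e3, e4, hz_twoMix_one i₀ j₁ hne]
    set r' := r ᵥ* S with hr'
    have hr'j₁ : r' j₁ = 0 := by
      rw [hr', hS, hz_twoMix_vecMul i₀ j₁ hne]
      rw [if_neg hj₁0, if_pos rfl]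
      linear_combination (-t₁) * h0 + t₀ * h1
    have hr'other : ∀ j, j ≠ i₀ → j ≠ j₁ → r' j = r j := by
      intro j hj0 hjj
      rw [hr', hS, hz_twoMix_vecMul i₀ j₁ hne, if_neg hj0, if_neg hjj]
    have hmem : j₁ ∈ Finset.univ.filter (fun j => j ≠ i₀ ∧ r j ≠ 0) := by
      simp [hj₁0, hj₁]
    have hsub : Finset.univ.filter (fun j => j ≠ i₀ ∧ r' j ≠ 0) ⊆
        (Finset.univ.filter (fun j => j ≠ i₀ ∧ r j ≠ 0)).erase j₁ := by
      intro j hj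
      simp only [Finset.mem_filter, Finset.mem_univ, true_and] at hj
      have hjj : j ≠ j₁ := fun h => hj.2 (h ▸ hr'j₁)
      refine Finset.mem_erase.mpr ⟨hjj, ?_⟩
      simp only [Finset.mem_filter, Finset.mem_univ, true_and]
      exact ⟨hj.1, fun h => hj.2 (by rw [hr'other j hj.1 hjj, h])⟩
    have hlt : (Finset.univ.filter (fun j => j ≠ i₀ ∧ r' j ≠ 0)).card < n := by
      calc (Finset.univ.filter (fun j => j ≠ i₀ ∧ r' j ≠ 0)).card
          ≤ ((Finset.univ.filter (fun j => j ≠ i₀ ∧ r j ≠ 0)).erase j₁).card :=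
            Finset.card_le_card hsub
        _ < (Finset.univ.filter (fun j => j ≠ i₀ ∧ r j ≠ 0)).card :=
            Finset.card_erase_lt_of_mem hmem
        _ = n := hn
    obtain ⟨Q₂, Q₂', h22', h2'2, hz⟩ := ih _ hlt r' rfl
    refine ⟨S * Q₂, Q₂' * S', ?_, ?_, ?_⟩
    · rw [mul_assoc, ← mul_assoc Q₂, h22', one_mul, hSS']
    · rw [mul_assoc, ← mul_assoc S', hS'S, one_mul, h2'2]
    · intro j hj
      rw [← Matrix.vecMul_vecMul]
      exact hz j hj

end Reduce

section Helmer3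
set_option linter.unusedSectionVars false
variable {R : Type*} [CommRing R] [IsDomain R] [IsBezout R]
variable (hadequate : ∀ a b : R, a ≠ 0 → ∃ a₁ a₂ : R, a = a₁ * a₂ ∧ IsCoprime a₁ b ∧
      ∀ a₃ : R, a₃ ∣ a₂ → ¬IsUnit a₃ → ¬IsCoprime a₃ b)

include hadequate in
/-- Two rows plus a scalar can be merged coprimally. -/
theorem hz_C2n (n : ℕ) (a : R) (b c : Fin n → R)
    (h : ∃ (x : R) (y z : Fin n → R), x * a + ∑ j, y j * b j + ∑ j, z j * c j = 1) :
    ∃ (p q : R) (v : Fin n → R), IsCoprime a (∑ j, (p * b j + q * c j) * v j) := by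
  classical
  obtain ⟨x, y, z, hxyz⟩ := h
  match n with
  | 0 =>
    refine ⟨0, 0, 0, ?_⟩
    simp only [Finset.univ_eq_empty, Finset.sum_empty] at hxyz ⊢
    rw [add_zero, add_zero] at hxyz
    exact isCoprime_zero_right.mpr (IsUnit.of_mul_eq_one (a := a) x (by rw [mul_comm, hxyz]))
  | (n' + 1) =>
    obtain ⟨Q, Q', hQQ', hQ'Q, hz⟩ := hz_reduce_row (R := R) (0 : Fin (n' + 1)) b
    set b' := b ᵥ* Q with hb'def
    set c' := c ᵥ* Q with hc'def
    set β := b' 0 with hβ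
    have hbQ' : b = b' ᵥ* Q' := by
      rw [hb'def, Matrix.vecMul_vecMul, hQQ', Matrix.vecMul_one]
    have hcQ' : c = c' ᵥ* Q' := by
      rw [hc'def, Matrix.vecMul_vecMul, hQQ', Matrix.vecMul_one]
    have hbj : ∀ j, b j = β * Q' 0 j := by
      intro j
      have h3 : b j = ∑ k, b' k * Q' k j := congrFun hbQ' j
      rw [h3, Finset.sum_eq_single (0 : Fin (n' + 1))
        (fun k _ hk => by rw [hz k hk, zero_mul])
        (fun h => absurd (Finset.mem_univ _) h)]
    have hcj : ∀ j, c j = ∑ k, c' k * Q' k j := fun j => congrFun hcQ' j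
    set Yc := ∑ j, y j * Q' 0 j with hYc
    set Z : Fin (n' + 1) → R := fun k => ∑ j, z j * Q' k j with hZ
    have e1 : ∑ j, y j * b j = Yc * β := by
      calc ∑ j, y j * b j = ∑ j, (y j * Q' 0 j) * β :=
            Finset.sum_congr rfl fun j _ => by rw [hbj j]; ring
        _ = Yc * β := by rw [hYc, Finset.sum_mul]
    have e2 : ∑ j, z j * c j = ∑ k, Z k * c' k := by
      calc ∑ j, z j * c j = ∑ j, ∑ k, (z j * Q' k j) * c' k :=
            Finset.sum_congr rfl fun j _ => by
              rw [hcj j, Finset.mul_sum]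
              exact Finset.sum_congr rfl fun k _ => by ring
        _ = ∑ k, ∑ j, (z j * Q' k j) * c' k := Finset.sum_comm
        _ = ∑ k, Z k * c' k := Finset.sum_congr rfl fun k _ => by rw [hZ, Finset.sum_mul]
    have key : x * a + Yc * β + (Z 0 * c' 0 + ∑ j : Fin n', Z j.succ * c' j.succ) = 1 := by
      have e3 : ∑ k, Z k * c' k = Z 0 * c' 0 + ∑ j : Fin n', Z j.succ * c' j.succ :=
        Fin.sum_univ_succ _
      linear_combination hxyz - e1 - e2 - e3
    obtain ⟨h₁, x₁, y₁, ta, tb, hc1, hda, hdb⟩ := hz_gcd_pair a β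
    obtain ⟨h₂, x₂, y₂, th, tc, hc2, hdh, hdc⟩ := hz_gcd_pair h₁ (c' 0)
    have hVhyp : ∃ (X : R) (Y : Fin n' → R),
        X * h₂ + ∑ j, Y j * c' (Fin.succ j) = 1 := by
      refine ⟨x * (th * ta) + Yc * (th * tb) + Z 0 * tc, fun j => Z j.succ, ?_⟩
      linear_combination key - x * hda - Yc * hdb - (x * ta + Yc * tb) * hdh - Z 0 * hdc
    obtain ⟨vb, hvbco⟩ := hz_V hadequate n' h₂ (fun j => c' j.succ) hVhyp
    set s := ∑ j, vb j * c' j.succ with hs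
    obtain ⟨α, γ, hαγ⟩ := hvbco
    obtain ⟨u₀, u₁, v₀, v₁, hco⟩ := hz_C22 hadequate a β (c' 0) s
      ⟨α * (x₂ * x₁), α * (x₂ * y₁), α * y₂, γ, by
        linear_combination hαγ + α * hc2 + α * x₂ * hc1⟩
    set V' : Fin (n' + 1) → R := Fin.cons v₀ (fun j => v₁ * vb j) with hV'
    refine ⟨u₀, u₁, Q *ᵥ V', ?_⟩
    have hLHS : ∑ j, (u₀ * b j + u₁ * c j) * (Q *ᵥ V') j
        = u₀ * (b ⬝ᵥ (Q *ᵥ V')) + u₁ * (c ⬝ᵥ (Q *ᵥ V')) := by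
      simp only [dotProduct, Finset.mul_sum, ← Finset.sum_add_distrib]
      exact Finset.sum_congr rfl fun j _ => by ring
    have hbv : b ⬝ᵥ (Q *ᵥ V') = β * v₀ := by
      rw [Matrix.dotProduct_mulVec, ← hb'def]
      have h4 : b' ⬝ᵥ V' = ∑ k, b' k * V' k := rfl
      rw [h4, Finset.sum_eq_single (0 : Fin (n' + 1))
        (fun k _ hk => by rw [hz k hk, zero_mul])
        (fun h => absurd (Finset.mem_univ _) h)]
      rw [hV', Fin.cons_zero, hβ]
    have hcv : c ⬝ᵥ (Q *ᵥ V') = c' 0 * v₀ + v₁ * s := by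
      rw [Matrix.dotProduct_mulVec, ← hc'def]
      have h4 : c' ⬝ᵥ V' = ∑ k, c' k * V' k := rfl
      rw [h4, Fin.sum_univ_succ]
      rw [hV']
      simp only [Fin.cons_zero, Fin.cons_succ]
      congr 1
      rw [hs, Finset.mul_sum]
      exact Finset.sum_congr rfl fun j _ => by ring
    rw [hLHS, hbv, hcv]
    exact hco


include hadequate in
/-- Many rows plus a scalar can be combined coprimally. -/
theorem hz_Cdn : ∀ (d n : ℕ) (a : R) (M : Matrix (Fin d) (Fin n) R),
    (∃ (x : R) (Y : Fin d → Fin n → R), x * a + ∑ i, ∑ j, Y i j * M i j = 1) →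
    ∃ (u : Fin d → R) (v : Fin n → R),
      IsCoprime a (∑ i, u i * (∑ j, M i j * v j)) := by
  intro d
  induction d using Nat.strong_induction_on with
  | _ d ih =>
  match d with
  | 0 =>
    rintro n a M ⟨x, Y, hxyz⟩
    refine ⟨0, 0, ?_⟩
    simp only [Finset.univ_eq_empty, Finset.sum_empty] at hxyz ⊢
    rw [add_zero] at hxyz
    exact isCoprime_zero_right.mpr (IsUnit.of_mul_eq_one (a := a) x (by rw [mul_comm, hxyz]))
  | 1 =>
    rintro n a M ⟨x, Y, hxyz⟩
    rw [Fin.sum_univ_one] at hxyz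
    obtain ⟨v, hv⟩ := hz_V hadequate n a (M 0) ⟨x, Y 0, hxyz⟩
    refine ⟨fun _ => 1, v, ?_⟩
    rw [Fin.sum_univ_one, one_mul]
    have e : ∑ j, M 0 j * v j = ∑ j, v j * M 0 j :=
      Finset.sum_congr rfl fun j _ => mul_comm _ _
    rw [e]; exact hv
  | (d' + 2) =>
    rintro n a M ⟨x, Y, hxyz⟩
    simp only [Fin.sum_univ_succ] at hxyz
    -- gcd of a together with the lower rows
    set sfam : Option (Fin d' × Fin n) → R :=
      fun o => o.elim a (fun pr => M pr.1.succ.succ pr.2) with hsfam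
    obtain ⟨g, w, t, hsum, ht⟩ := hz_exists_gcd sfam
    rw [Fintype.sum_option] at hsum
    simp only [hsfam, Option.elim] at hsum ht
    have htnone : a = g * t none := ht none
    have htsome : ∀ (i : Fin d') (j : Fin n), M i.succ.succ j = g * t (some (i, j)) :=
      fun i j => ht (some (i, j))
    have e4 : ∑ i : Fin d', ∑ j, Y i.succ.succ j * M i.succ.succ j
        = (∑ i : Fin d', ∑ j, Y i.succ.succ j * t (some (i, j))) * g := by
      calc ∑ i : Fin d', ∑ j, Y i.succ.succ j * M i.succ.succ j
          = ∑ i : Fin d', (∑ j, Y i.succ.succ j * t (some (i, j))) * g :=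
            Finset.sum_congr rfl fun i _ => by
              rw [Finset.sum_mul]
              exact Finset.sum_congr rfl fun j _ => by rw [htsome i j]; ring
        _ = _ := by rw [Finset.sum_mul]
    obtain ⟨p, q, v2, hco2⟩ := hz_C2n hadequate n g (M 0) (M (Fin.succ 0))
      ⟨x * t none + ∑ i : Fin d', ∑ j, Y i.succ.succ j * t (some (i, j)), Y 0, Y (Fin.succ 0), by
        linear_combination hxyz - x * htnone - e4⟩
    set M' : Matrix (Fin (d' + 1)) (Fin n) R :=
      Matrix.of (fun i => Fin.cases (fun j => p * M 0 j + q * M (Fin.succ 0) j)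
        (fun i' j => M i'.succ.succ j) i) with hM'
    obtain ⟨α, γ, hαγ⟩ := hco2
    have hprod : ∑ pr : Fin d' × Fin n, w (some pr) * M pr.1.succ.succ pr.2
        = ∑ i : Fin d', ∑ j, w (some (i, j)) * M i.succ.succ j :=
      Fintype.sum_prod_type _
    have hIHhyp : ∃ (x' : R) (Y' : Fin (d' + 1) → Fin n → R),
        x' * a + ∑ i, ∑ j, Y' i j * M' i j = 1 := by
      refine ⟨α * w none, fun i => Fin.cases (fun j => γ * v2 j)
        (fun i' j => α * w (some (i', j))) i, ?_⟩
      simp only [Fin.sum_univ_succ, hM', Matrix.of_apply, Fin.cases_zero, Fin.cases_succ]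
      have e6 : ∑ j, (γ * v2 j) * (p * M 0 j + q * M (Fin.succ 0) j)
          = γ * ∑ j, (p * M 0 j + q * M (Fin.succ 0) j) * v2 j := by
        rw [Finset.mul_sum]
        exact Finset.sum_congr rfl fun j _ => by ring
      have e7 : ∑ i : Fin d', ∑ j, (α * w (some (i, j))) * M i.succ.succ j
          = α * ∑ i : Fin d', ∑ j, w (some (i, j)) * M i.succ.succ j := by
        rw [Finset.mul_sum]
        exact Finset.sum_congr rfl fun i _ => by
          rw [Finset.mul_sum]
          exact Finset.sum_congr rfl fun j _ => by ring
      linear_combination hαγ + α * hsum - α * hprod + e6 + e7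
    obtain ⟨u', v, hcoIH⟩ := ih (d' + 1) (by omega) n a M' hIHhyp
    set u : Fin (d' + 2) → R := fun i => Fin.cases (u' 0 * p)
      (fun i' => Fin.cases (u' 0 * q) (fun i'' => u' i''.succ) i') i with hu
    refine ⟨u, v, ?_⟩
    have hEq : (∑ i : Fin (d' + 1), u' i * (∑ j, M' i j * v j))
        = ∑ i : Fin (d' + 2), u i * (∑ j, M i j * v j) := by
      simp only [Fin.sum_univ_succ, hu, hM', Matrix.of_apply, Fin.cases_zero, Fin.cases_succ]
      have e8 : ∑ j, (p * M 0 j + q * M (Fin.succ 0) j) * v j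
          = p * (∑ j, M 0 j * v j) + q * (∑ j, M (Fin.succ 0) j * v j) := by
        rw [Finset.mul_sum, Finset.mul_sum, ← Finset.sum_add_distrib]
        exact Finset.sum_congr rfl fun j _ => by ring
      linear_combination u' 0 * e8
    rw [← hEq]; exact hcoIH

include hadequate in
/-- Corner lemma: a matrix with coprime entries is equivalent to one with `1` in the corner. -/
theorem hz_corner (d' e' : ℕ) (M : Matrix (Fin (d' + 1)) (Fin (e' + 1)) R)
    (h : ∃ Y : Fin (d' + 1) → Fin (e' + 1) → R, ∑ i, ∑ j, Y i j * M i j = 1) :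
    ∃ (P P' : Matrix (Fin (d' + 1)) (Fin (d' + 1)) R)
      (Q Q' : Matrix (Fin (e' + 1)) (Fin (e' + 1)) R),
      P * P' = 1 ∧ P' * P = 1 ∧ Q * Q' = 1 ∧ Q' * Q = 1 ∧ (P * M * Q) 0 0 = 1 := by
  classical
  obtain ⟨Y, hY⟩ := h
  obtain ⟨u, v, hco⟩ := hz_Cdn hadequate (d' + 1) (e' + 1) 0 M ⟨0, Y, by
    rw [mul_zero, zero_add]; exact hY⟩
  have hunit : IsUnit (∑ i, u i * ∑ j, M i j * v j) := isCoprime_zero_left.mp hco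
  obtain ⟨ε, hε⟩ := hunit
  set u₁ : Fin (d' + 1) → R := fun i => (↑ε⁻¹ : R) * u i with hu₁def
  have hu₁ : ∑ i, u₁ i * (∑ j, M i j * v j) = 1 := by
    have e1 : ∑ i, u₁ i * (∑ j, M i j * v j)
        = (↑ε⁻¹ : R) * ∑ i, u i * (∑ j, M i j * v j) := by
      rw [Finset.mul_sum]
      exact Finset.sum_congr rfl fun i _ => by rw [hu₁def]; ring
    rw [e1, ← hε, Units.inv_mul]
  obtain ⟨Qu, Qu', hQu1, hQu2, hzu⟩ := hz_reduce_row (R := R) (0 : Fin (d' + 1)) u₁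
  set γ := (u₁ ᵥ* Qu) 0 with hγdef
  have hu₁eq : u₁ = (u₁ ᵥ* Qu) ᵥ* Qu' := by
    rw [Matrix.vecMul_vecMul, hQu1, Matrix.vecMul_one]
  have h5 : u₁ ⬝ᵥ (M *ᵥ v) = 1 := hu₁
  have h5' : u₁ ⬝ᵥ (M *ᵥ v) = γ * (((Qu' * M) *ᵥ v) 0) := by
    conv_lhs => rw [hu₁eq]
    rw [← Matrix.dotProduct_mulVec, Matrix.mulVec_mulVec]
    have e2 : (u₁ ᵥ* Qu) ⬝ᵥ ((Qu' * M) *ᵥ v)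
        = ∑ k, (u₁ ᵥ* Qu) k * ((Qu' * M) *ᵥ v) k := rfl
    rw [e2, Finset.sum_eq_single (0 : Fin (d' + 1))
      (fun k _ hk => by rw [hzu k hk, zero_mul])
      (fun hmem => absurd (Finset.mem_univ _) hmem)]
  have hγ : γ * (((Qu' * M) *ᵥ v) 0) = 1 := by rw [← h5', h5]
  obtain ⟨Qv, Qv', hQv1, hQv2, hzv⟩ := hz_reduce_row (R := R) (0 : Fin (e' + 1)) v
  set δ := (v ᵥ* Qv) 0 with hδdef
  have hveq : v = (v ᵥ* Qv) ᵥ* Qv' := by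
    rw [Matrix.vecMul_vecMul, hQv1, Matrix.vecMul_one]
  have hvj : ∀ j, v j = δ * Qv' 0 j := by
    intro j
    have h3 : v j = ∑ k, (v ᵥ* Qv) k * Qv' k j := congrFun hveq j
    rw [h3, Finset.sum_eq_single (0 : Fin (e' + 1))
      (fun k _ hk => by rw [hzv k hk, zero_mul])
      (fun hmem => absurd (Finset.mem_univ _) hmem)]
  set κ := (Qu' * M * Qv'ᵀ) 0 0 with hκdef
  have h6 : ((Qu' * M) *ᵥ v) 0 = κ * δ := by
    have e3 : ((Qu' * M) *ᵥ v) 0 = ∑ j, (Qu' * M) 0 j * v j := rfl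
    have e4 : κ = ∑ j, (Qu' * M) 0 j * Qv' 0 j := by
      rw [hκdef]
      have : (Qu' * M * Qv'ᵀ) 0 0 = ∑ j, (Qu' * M) 0 j * Qv'ᵀ j 0 := rfl
      rw [this]
      exact Finset.sum_congr rfl fun j _ => rfl
    rw [e3, e4, Finset.sum_mul]
    exact Finset.sum_congr rfl fun j _ => by rw [hvj j]; ring
  have hfin : γ * (κ * δ) = 1 := by rw [← h6]; exact hγ
  set Dl : Matrix (Fin (d' + 1)) (Fin (d' + 1)) R :=
    Matrix.diagonal (fun i => if i = 0 then γ else 1) with hDl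
  set Dl' : Matrix (Fin (d' + 1)) (Fin (d' + 1)) R :=
    Matrix.diagonal (fun i => if i = 0 then κ * δ else 1) with hDl'
  set Dr : Matrix (Fin (e' + 1)) (Fin (e' + 1)) R :=
    Matrix.diagonal (fun j => if j = 0 then δ else 1) with hDr
  set Dr' : Matrix (Fin (e' + 1)) (Fin (e' + 1)) R :=
    Matrix.diagonal (fun j => if j = 0 then γ * κ else 1) with hDr'
  have hDlDl' : Dl * Dl' = 1 := by
    rw [hDl, hDl', Matrix.diagonal_mul_diagonal, ← Matrix.diagonal_one]
    apply congrArg Matrix.diagonal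
    funext i
    split_ifs
    · linear_combination hfin
    · exact one_mul 1
  have hDl'Dl : Dl' * Dl = 1 := by
    rw [hDl, hDl', Matrix.diagonal_mul_diagonal, ← Matrix.diagonal_one]
    apply congrArg Matrix.diagonal
    funext i
    split_ifs
    · linear_combination hfin
    · exact one_mul 1
  have hDrDr' : Dr * Dr' = 1 := by
    rw [hDr, hDr', Matrix.diagonal_mul_diagonal, ← Matrix.diagonal_one]
    apply congrArg Matrix.diagonal
    funext j
    split_ifs
    · linear_combination hfin
    · exact one_mul 1
  have hDr'Dr : Dr' * Dr = 1 := by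
    rw [hDr, hDr', Matrix.diagonal_mul_diagonal, ← Matrix.diagonal_one]
    apply congrArg Matrix.diagonal
    funext j
    split_ifs
    · linear_combination hfin
    · exact one_mul 1
  refine ⟨Dl * Qu', Qu * Dl', Qv'ᵀ * Dr, Dr' * Qvᵀ, ?_, ?_, ?_, ?_, ?_⟩
  · rw [mul_assoc, ← mul_assoc Qu', hQu2, one_mul, hDlDl']
  · rw [mul_assoc, ← mul_assoc Dl', hDl'Dl, one_mul, hQu1]
  · rw [mul_assoc, ← mul_assoc Dr, hDrDr', one_mul, ← Matrix.transpose_mul, hQv1,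
      Matrix.transpose_one]
  · rw [mul_assoc, ← mul_assoc Qvᵀ, ← Matrix.transpose_mul, hQv2, Matrix.transpose_one,
      one_mul, hDr'Dr]
  · have e5 : Dl * Qu' * M * (Qv'ᵀ * Dr) = Dl * (Qu' * M * Qv'ᵀ) * Dr := by
      calc Dl * Qu' * M * (Qv'ᵀ * Dr)
          = Dl * (Qu' * M) * (Qv'ᵀ * Dr) := by rw [Matrix.mul_assoc Dl Qu' M]
        _ = Dl * (Qu' * M) * Qv'ᵀ * Dr := by
            rw [← Matrix.mul_assoc (Dl * (Qu' * M)) Qv'ᵀ Dr]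
        _ = Dl * (Qu' * M * Qv'ᵀ) * Dr := by
            rw [Matrix.mul_assoc Dl (Qu' * M) Qv'ᵀ]
    rw [e5]
    rw [hκdef] at hfin
    rw [hDl, hDr, Matrix.mul_diagonal, Matrix.diagonal_mul, if_pos rfl, if_pos rfl]
    linear_combination hfin

section Lift
variable {R : Type*} [CommRing R]

/-- Block diagonal matrix `[[x, 0], [0, X]]` in `Fin (a+1) × Fin (b+1)` coordinates. -/
def hz_lift {a b : ℕ} (x : R) (X : Matrix (Fin a) (Fin b) R) :
    Matrix (Fin (a + 1)) (Fin (b + 1)) R :=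
  Matrix.of fun i j =>
    Fin.cases (Fin.cases x (fun _ => 0) j) (fun i' => Fin.cases 0 (fun j' => X i' j') j) i

@[simp] theorem hz_lift_00 {a b : ℕ} (x : R) (X : Matrix (Fin a) (Fin b) R) :
    hz_lift x X 0 0 = x := by simp [hz_lift]

@[simp] theorem hz_lift_0s {a b : ℕ} (x : R) (X : Matrix (Fin a) (Fin b) R) (j : Fin b) :
    hz_lift x X 0 j.succ = 0 := by simp [hz_lift]

@[simp] theorem hz_lift_s0 {a b : ℕ} (x : R) (X : Matrix (Fin a) (Fin b) R) (i : Fin a) :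
    hz_lift x X i.succ 0 = 0 := by simp [hz_lift]

@[simp] theorem hz_lift_ss {a b : ℕ} (x : R) (X : Matrix (Fin a) (Fin b) R)
    (i : Fin a) (j : Fin b) : hz_lift x X i.succ j.succ = X i j := by simp [hz_lift]

theorem hz_lift_mul {a b c : ℕ} (x y : R) (X : Matrix (Fin a) (Fin b) R)
    (Y : Matrix (Fin b) (Fin c) R) :
    hz_lift x X * hz_lift y Y = hz_lift (x * y) (X * Y) := by
  ext i j
  rw [Matrix.mul_apply, Fin.sum_univ_succ]
  induction i using Fin.cases <;> induction j using Fin.cases <;>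
    simp [Matrix.mul_apply]

theorem hz_lift_one {a : ℕ} : hz_lift (1 : R) (1 : Matrix (Fin a) (Fin a) R) = 1 := by
  ext i j
  induction i using Fin.cases <;> induction j using Fin.cases <;>
    simp [Matrix.one_apply, Fin.succ_ne_zero, (Fin.succ_ne_zero _).symm, Fin.succ_inj]

theorem hz_lift_smul {a b : ℕ} (g x : R) (X : Matrix (Fin a) (Fin b) R) :
    g • hz_lift x X = hz_lift (g * x) (g • X) := by
  ext i j
  rw [Matrix.smul_apply]
  induction i using Fin.cases <;> induction j using Fin.cases <;>
    simp [smul_eq_mul]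

/-- Row-clearing elementary matrix. -/
def hz_elemL {d : ℕ} (c : Fin (d + 1) → R) : Matrix (Fin (d + 1)) (Fin (d + 1)) R :=
  Matrix.of fun i k => if i = k then 1 else if k = 0 then c i else 0

/-- Column-clearing elementary matrix. -/
def hz_elemC {e : ℕ} (r : Fin (e + 1) → R) : Matrix (Fin (e + 1)) (Fin (e + 1)) R :=
  Matrix.of fun k j => if k = j then 1 else if k = 0 then r j else 0

theorem hz_elemL_mul {d : ℕ} (c : Fin (d + 1) → R) {m : Type} [Fintype m]
    (X : Matrix (Fin (d + 1)) m R) (i : Fin (d + 1)) (j : m) :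
    (hz_elemL c * X) i j = X i j + (if i = 0 then 0 else c i * X 0 j) := by
  classical
  rw [Matrix.mul_apply]
  have hpt : ∀ k, hz_elemL c i k * X k j
      = (if k = i then X k j else 0) + (if k = 0 then (if i = 0 then 0 else c i * X k j) else 0) := by
    intro k
    by_cases hk : k = i
    · subst hk
      by_cases hk0 : k = 0 <;> simp [hz_elemL, hk0]
    · by_cases hk0 : k = 0
      · subst hk0
        have hne : i ≠ 0 := fun h => hk h.symm
        simp [hz_elemL, Ne.symm hk, hne]
        exact fun h => absurd h.symm hne
      · have h1 : hz_elemL c i k = 0 := by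
          have h2 : hz_elemL c i k = if i = k then (1:R) else if k = 0 then c i else 0 := rfl
          rw [h2, if_neg (fun h : i = k => hk h.symm), if_neg hk0]
        simp [h1, hk, hk0]
  rw [Finset.sum_congr rfl fun k _ => hpt k, Finset.sum_add_distrib,
    Finset.sum_ite_eq' Finset.univ i (fun k => X k j),
    Finset.sum_ite_eq' Finset.univ (0 : Fin (d + 1))
      (fun k => if i = 0 then 0 else c i * X k j)]
  simp

theorem hz_elemC_mul {e : ℕ} (r : Fin (e + 1) → R) {m : Type} [Fintype m]
    (X : Matrix m (Fin (e + 1)) R) (i : m) (j : Fin (e + 1)) :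
    (X * hz_elemC r) i j = X i j + (if j = 0 then 0 else X i 0 * r j) := by
  classical
  rw [Matrix.mul_apply]
  have hpt : ∀ k, X i k * hz_elemC r k j
      = (if k = j then X i k else 0) + (if k = 0 then (if j = 0 then 0 else X i k * r j) else 0) := by
    intro k
    by_cases hk : k = j
    · subst hk
      by_cases hk0 : k = 0 <;> simp [hz_elemC, hk0]
    · by_cases hk0 : k = 0
      · subst hk0
        have : j ≠ 0 := fun h => hk h.symm
        simp [hz_elemC, hk, this]
      · simp [hz_elemC, hk, hk0]
  rw [Finset.sum_congr rfl fun k _ => hpt k, Finset.sum_add_distrib,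
    Finset.sum_ite_eq' Finset.univ j (fun k => X i k),
    Finset.sum_ite_eq' Finset.univ (0 : Fin (e + 1))
      (fun k => if j = 0 then 0 else X i k * r j)]
  simp

theorem hz_elemL_inv {d : ℕ} (c c' : Fin (d + 1) → R) (h : ∀ i, c i + c' i = 0) :
    hz_elemL c * hz_elemL c' = 1 := by
  ext i j
  rw [hz_elemL_mul]
  by_cases hi : i = 0
  · subst hi
    rw [if_pos rfl, add_zero]
    rcases eq_or_ne j 0 with rfl | hj
    · simp [hz_elemL, Matrix.one_apply]
    · simp [hz_elemL, hj, Ne.symm hj, Matrix.one_apply_ne (Ne.symm hj)]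
  · by_cases hj : j = 0
    · subst hj
      have h2 : hz_elemL c' i 0 = c' i := by simp [hz_elemL, hi]
      have h3 : hz_elemL c' 0 0 = 1 := by simp [hz_elemL]
      rw [h2, h3, if_neg hi, Matrix.one_apply_ne hi, mul_one]
      linear_combination h i
    · have h3 : hz_elemL c' 0 j = 0 := by simp [hz_elemL, Ne.symm hj, hj]
      rw [h3, if_neg hi, mul_zero, add_zero]
      by_cases hij : i = j
      · subst hij; simp [hz_elemL, Matrix.one_apply]
      · simp [hz_elemL, hij, hj, Matrix.one_apply_ne hij]

theorem hz_elemC_inv {e : ℕ} (r r' : Fin (e + 1) → R) (h : ∀ j, r j + r' j = 0) :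
    hz_elemC r * hz_elemC r' = 1 := by
  ext i j
  rw [hz_elemC_mul]
  by_cases hj : j = 0
  · subst hj
    have h2 : hz_elemC r i 0 = if i = 0 then 1 else 0 := by
      by_cases hi : i = 0
      · subst hi; simp [hz_elemC]
      · simp [hz_elemC, hi]
    rw [if_pos rfl, add_zero, h2, Matrix.one_apply]
  · by_cases hi : i = 0
    · subst hi
      have h2 : hz_elemC r 0 j = r j := by simp [hz_elemC, Ne.symm hj]
      have h3 : hz_elemC r 0 0 = 1 := by simp [hz_elemC]
      rw [h2, h3, if_neg hj, one_mul, Matrix.one_apply_ne (Ne.symm hj)]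
      linear_combination h j
    · have h2 : hz_elemC r i 0 = 0 := by simp [hz_elemC, hi, Ne.symm hi]
      rw [if_neg hj, h2, zero_mul, add_zero]
      by_cases hij : i = j
      · subst hij; simp [hz_elemC, Matrix.one_apply]
      · simp [hz_elemC, hi, hij, Ne.symm hj, Matrix.one_apply_ne hij]

/-- Clearing the first row and column when the corner is 1. -/
theorem hz_clear {d' e' : ℕ} (N : Matrix (Fin (d' + 1)) (Fin (e' + 1)) R) (hN : N 0 0 = 1) :
    ∃ (L L' : Matrix (Fin (d' + 1)) (Fin (d' + 1)) R)
      (C C' : Matrix (Fin (e' + 1)) (Fin (e' + 1)) R),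
      L * L' = 1 ∧ L' * L = 1 ∧ C * C' = 1 ∧ C' * C = 1 ∧
      L * N * C = hz_lift 1 (Matrix.of fun i j => (L * N * C) i.succ j.succ) := by
  classical
  set L := hz_elemL (R := R) (d := d') (fun i => -(N i 0)) with hLdef
  set L' := hz_elemL (R := R) (d := d') (fun i => N i 0) with hL'def
  have hrow0 : ∀ j, (L * N) 0 j = N 0 j := by
    intro j
    rw [hLdef, hz_elemL_mul, if_pos rfl, add_zero]
  have hcol : ∀ i, i ≠ 0 → (L * N) i 0 = 0 := by
    intro i hi
    rw [hLdef, hz_elemL_mul, if_neg hi, hN]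
    ring
  set C := hz_elemC (R := R) (e := e') (fun j => -((L * N) 0 j)) with hCdef
  set C' := hz_elemC (R := R) (e := e') (fun j => (L * N) 0 j) with hC'def
  have hLL' : L * L' = 1 := hz_elemL_inv _ _ fun i => by ring
  have hL'L : L' * L = 1 := hz_elemL_inv _ _ fun i => by ring
  have hCC' : C * C' = 1 := hz_elemC_inv _ _ fun j => by ring
  have hC'C : C' * C = 1 := hz_elemC_inv _ _ fun j => by ring
  refine ⟨L, L', C, C', hLL', hL'L, hCC', hC'C, ?_⟩
  have hN''00 : (L * N * C) 0 0 = 1 := by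
    rw [hCdef, hz_elemC_mul, if_pos rfl, add_zero, hrow0, hN]
  have hN''row : ∀ j : Fin e', (L * N * C) 0 j.succ = 0 := by
    intro j
    rw [hCdef, hz_elemC_mul, if_neg (Fin.succ_ne_zero j), hrow0, hrow0, hN]
    ring
  have hN''col : ∀ i : Fin d', (L * N * C) i.succ 0 = 0 := by
    intro i
    rw [hCdef, hz_elemC_mul, if_pos rfl, add_zero, hcol _ (Fin.succ_ne_zero i)]
  ext i j
  induction i using Fin.cases <;> induction j using Fin.cases
  · rw [hN''00, hz_lift_00]
  · rw [hN''row, hz_lift_0s]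
  · rw [hN''col, hz_lift_s0]
  · rw [hz_lift_ss, Matrix.of_apply]

theorem hz_sandwich {d e : Type} [Fintype d] [DecidableEq d] [Fintype e] [DecidableEq e]
    (A A' : Matrix d d R) (B B' : Matrix e e R) (X : Matrix d e R)
    (hA : A' * A = 1) (hB : B * B' = 1) : A' * (A * X * B) * B' = X := by
  simp only [Matrix.mul_assoc]
  rw [hB, Matrix.mul_one, ← Matrix.mul_assoc A' A X, hA, Matrix.one_mul]

theorem hz_inv3 {m : Type} [Fintype m] [DecidableEq m] (A B C A' B' C' : Matrix m m R)
    (hC : C * C' = 1) (hB : B * B' = 1) (hA : A * A' = 1) :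
    A * B * C * (C' * B' * A') = 1 := by
  simp only [Matrix.mul_assoc]
  rw [← Matrix.mul_assoc C C' (B' * A'), hC, Matrix.one_mul,
    ← Matrix.mul_assoc B B' A', hB, Matrix.one_mul, hA]

end Lift

include hadequate in
theorem hz_smith : ∀ (n d e : ℕ), d + e ≤ n → ∀ M : Matrix (Fin d) (Fin e) R,
    ∃ (P P' : Matrix (Fin d) (Fin d) R) (Q Q' : Matrix (Fin e) (Fin e) R) (f : ℕ → R),
      P * P' = 1 ∧ P' * P = 1 ∧ Q * Q' = 1 ∧ Q' * Q = 1 ∧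
      (∀ k, f k ∣ f (k + 1)) ∧ (∀ k, min d e ≤ k → f k = 0) ∧
      M = P * (Matrix.of fun (i : Fin d) (j : Fin e) =>
        if (i : ℕ) = (j : ℕ) then f (i : ℕ) else 0) * Q := by
  intro n
  induction n using Nat.strong_induction_on with
  | _ n ih =>
  intro d e hde M
  match d, e, hde, M with
  | 0, e, hde, M =>
    refine ⟨1, 1, 1, 1, 0, by simp, by simp, by simp, by simp,
      fun k => dvd_refl 0, fun k _ => rfl, ?_⟩
    ext i j
    exact i.elim0
  | (d' + 1), 0, hde, M =>
    refine ⟨1, 1, 1, 1, 0, by simp, by simp, by simp, by simp,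
      fun k => dvd_refl 0, fun k _ => rfl, ?_⟩
    ext i j
    exact j.elim0
  | (d' + 1), (e' + 1), hde, M =>
    by_cases hM0 : M = 0
    · refine ⟨1, 1, 1, 1, fun _ => 0, by simp, by simp, by simp, by simp,
        fun k => dvd_refl 0, fun k _ => rfl, ?_⟩
      rw [Matrix.mul_one, Matrix.one_mul, hM0]
      ext i j
      simp
    · obtain ⟨g, w, t, hsum, ht⟩ := hz_exists_gcd
        (ι := Fin (d' + 1) × Fin (e' + 1)) (fun pr => M pr.1 pr.2)
      set T : Matrix (Fin (d' + 1)) (Fin (e' + 1)) R :=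
        Matrix.of fun i j => t (i, j) with hT
      have hMT : ∀ i j, M i j = g * T i j := fun i j => ht (i, j)
      have hg0 : g ≠ 0 := by
        intro h
        apply hM0
        ext i j
        rw [hMT i j, h, zero_mul, Matrix.zero_apply]
      have hcombo : ∑ i, ∑ j, w (i, j) * T i j = 1 := by
        have e1 : ∑ i, ∑ j, w (i, j) * M i j
            = g * ∑ i, ∑ j, w (i, j) * T i j := by
          rw [Finset.mul_sum]
          refine Finset.sum_congr rfl fun i _ => ?_
          rw [Finset.mul_sum]
          exact Finset.sum_congr rfl fun j _ => by rw [hMT i j]; ring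
        have e2 : ∑ i, ∑ j, w (i, j) * M i j = g := by
          rw [← hsum, Fintype.sum_prod_type]
        rw [e2] at e1
        exact (mul_left_cancel₀ hg0 (by rw [← e1, mul_one])).symm
      obtain ⟨P₀, P₀', Q₀, Q₀', hP1, hP2, hQ1, hQ2, hcorner⟩ :=
        hz_corner hadequate d' e' T ⟨fun i j => w (i, j), hcombo⟩
      obtain ⟨L, L', C, C', hL1, hL2, hC1, hC2, hclear⟩ := hz_clear (P₀ * T * Q₀) hcorner
      set K : Matrix (Fin d') (Fin e') R :=
        Matrix.of fun i j => (L * (P₀ * T * Q₀) * C) i.succ j.succ with hK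
      obtain ⟨P₁, P₁', Q₁, Q₁', f₁, hP₁1, hP₁2, hQ₁1, hQ₁2, hchain₁, hzero₁, hfact₁⟩ :=
        ih (d' + e') (by omega) d' e' (le_refl _) (g • K)
      set D₁ : Matrix (Fin d') (Fin e') R :=
        Matrix.of fun i j => if (i : ℕ) = (j : ℕ) then f₁ (i : ℕ) else 0 with hD₁
      have hDeq : D₁ = P₁' * (g • K) * Q₁' := by
        rw [hfact₁, hz_sandwich P₁ P₁' Q₁ Q₁' D₁ hP₁2 hQ₁1]
      have hgdvd : ∀ i j, g ∣ (P₁' * (g • K) * Q₁') i j := by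
        intro i j
        rw [Matrix.mul_apply]
        refine Finset.dvd_sum fun l _ => ?_
        rw [Matrix.mul_apply, Finset.sum_mul]
        refine Finset.dvd_sum fun m _ => ?_
        have hsm : (g • K) m l = g * K m l := rfl
        exact ⟨P₁' i m * K m l * Q₁' l j, by rw [hsm]; ring⟩
      have hgf : ∀ k : ℕ, g ∣ f₁ k := by
        intro k
        by_cases hk : k < d' ∧ k < e'
        · have hd : f₁ k = (P₁' * (g • K) * Q₁') ⟨k, hk.1⟩ ⟨k, hk.2⟩ := by
            have := congrFun (congrFun hDeq ⟨k, hk.1⟩) ⟨k, hk.2⟩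
            rw [hD₁] at this
            simpa using this
          rw [hd]
          exact hgdvd _ _
        · have : min d' e' ≤ k := by omega
          rw [hzero₁ k this]
          exact dvd_zero g
      set f : ℕ → R := fun k => Nat.casesOn k g (fun k' => f₁ k') with hf
      have hchain : ∀ k, f k ∣ f (k + 1) := by
        intro k
        cases k with
        | zero => exact hgf 0
        | succ k' => exact hchain₁ k'
      have hzero : ∀ k, min (d' + 1) (e' + 1) ≤ k → f k = 0 := by
        intro k hk
        rw [Nat.succ_min_succ] at hk
        cases k with
        | zero => omega
        | succ k' => exact hzero₁ k' (by omega)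
      set Dfull : Matrix (Fin (d' + 1)) (Fin (e' + 1)) R :=
        Matrix.of fun i j => if (i : ℕ) = (j : ℕ) then f (i : ℕ) else 0 with hDfull
      have hDlift : Dfull = hz_lift g D₁ := by
        rw [hDfull, hD₁]
        ext i j
        induction i using Fin.cases <;> induction j using Fin.cases
        · rfl
        · simp
        · simp
        · rw [hz_lift_ss, Matrix.of_apply, Matrix.of_apply]
          simp only [Fin.val_succ, add_left_inj]
          rfl
      have h9 : g • (hz_lift 1 K) = hz_lift (1:R) P₁ * Dfull * hz_lift (1:R) Q₁ := by
        rw [hz_lift_smul, mul_one, hfact₁, hDlift, hz_lift_mul, hz_lift_mul, one_mul,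
          mul_one]
      have hTeq : T = P₀' * (L' * hz_lift 1 K * C') * Q₀' := by
        have h10 : P₀' * (P₀ * T * Q₀) * Q₀' = T := hz_sandwich _ _ _ _ _ hP2 hQ1
        have h11 : L' * (L * (P₀ * T * Q₀) * C) * C' = P₀ * T * Q₀ :=
          hz_sandwich _ _ _ _ _ hL2 hC1
        rw [hclear] at h11
        rw [h11]
        exact h10.symm
      have hMgT : M = g • T := by
        ext i j
        rw [Matrix.smul_apply, smul_eq_mul]
        exact hMT i j
      refine ⟨P₀' * L' * hz_lift 1 P₁, hz_lift 1 P₁' * L * P₀,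
        hz_lift 1 Q₁ * C' * Q₀', Q₀ * C * hz_lift 1 Q₁', f, ?_, ?_, ?_, ?_,
        hchain, hzero, ?_⟩
      · exact hz_inv3 _ _ _ _ _ _
          (by rw [hz_lift_mul, hP₁1, one_mul, hz_lift_one]) hL2 hP2
      · exact hz_inv3 _ _ _ _ _ _ hP1 hL1
          (by rw [hz_lift_mul, hP₁2, one_mul, hz_lift_one])
      · exact hz_inv3 _ _ _ _ _ _ hQ2 hC2
          (by rw [hz_lift_mul, hQ₁1, one_mul, hz_lift_one])
      · exact hz_inv3 _ _ _ _ _ _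
          (by rw [hz_lift_mul, hQ₁2, one_mul, hz_lift_one]) hC1 hQ1
      · rw [hMgT, hTeq]
        have hsmul1 : g • (P₀' * (L' * hz_lift 1 K * C') * Q₀')
            = P₀' * (L' * (g • hz_lift 1 K) * C') * Q₀' := by
          rw [Matrix.mul_smul, Matrix.smul_mul, Matrix.mul_smul, Matrix.smul_mul]
        rw [hsmul1, h9]
        simp only [Matrix.mul_assoc]
        rfl

end Helmer3


/-- Helmer's theorem: let `R` be a Bezout domain (every finitely generated ideal is principal)
which is adequate: for all `a b ∈ R` with `a ≠ 0` one can write `a = a₁a₂` with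
`gcd(a₁, b) = 1` (i.e. `(a₁, b) = R`, i.e. `IsCoprime a₁ b`) and such that every non-unit divisor
`a₃` of `a₂` satisfies `gcd(a₃, b) ≠ 1`.  Then every matrix `M ∈ M_{d×e}(R)` admits a Smith
normal form `M = P · diag(f₁, f₂, …) · Q` with `P ∈ GL_d(R)`, `Q ∈ GL_e(R)` and
`f₁ ∣ f₂ ∣ ⋯`. -/
theorem adequate_bezout_smith_normal_form (R : Type*) [CommRing R] [IsDomain R] [IsBezout R]
    (hadequate : ∀ a b : R, a ≠ 0 → ∃ a₁ a₂ : R, a = a₁ * a₂ ∧ IsCoprime a₁ b ∧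
      ∀ a₃ : R, a₃ ∣ a₂ → ¬IsUnit a₃ → ¬IsCoprime a₃ b)
    (d e : ℕ) (M : Matrix (Fin d) (Fin e) R) :
    ∃ (P : Matrix (Fin d) (Fin d) R) (Q : Matrix (Fin e) (Fin e) R) (f : ℕ → R),
      IsUnit P.det ∧ IsUnit Q.det ∧ (∀ i : ℕ, f i ∣ f (i + 1)) ∧
      M = P * Matrix.of (fun (i : Fin d) (j : Fin e) =>
        if (i : ℕ) = (j : ℕ) then f (i : ℕ) else 0) * Q := by
  obtain ⟨P, P', Q, Q', f, hPP', hP'P, hQQ', hQ'Q, hchain, _, heq⟩ :=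
    hz_smith hadequate (d + e) d e (le_refl _) M
  refine ⟨P, Q, f, ?_, ?_, hchain, heq⟩
  · exact IsUnit.of_mul_eq_one _ (by rw [← Matrix.det_mul, hPP', Matrix.det_one])
  · exact IsUnit.of_mul_eq_one _ (by rw [← Matrix.det_mul, hQQ', Matrix.det_one])
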